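/- Let β∈(1/2,1), k=p^{1−β}, k log(p)/n→0, r_{np}=(φ(β)+δ_0)√(k log(p)/n) with δ_0>0 small, T_p=√(log p), u=2φ(β) if β∈(1/2,3/4] and u=√2 if β∈(3/4,1), ũ=u(1+δ) and ρ̃_j=(1−δ)√n|θ_j| with δ=δ_{np}→0. Then there exists η>0 such that for n,p large enough, inf over θ∈Θ̃^{(3)}_k(r_{np}) of Σ_{j=1}^k Φ(−ũT_p+ρ̃_j)/√(2pΦ(−uT_p)) > p^η (this infimum is asymptotically equivalent to the infimum of E_θ(L̃_1(u))). -/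

import Mathlib

open Filter Asymptotics

noncomputable section

/-- Standard Gaussian density. -/
def gaussPDF (x : ℝ) : ℝ := Real.exp (-(x ^ 2) / 2) / Real.sqrt (2 * Real.pi)

/-- Standard Gaussian cdf `Φ`. -/
def gaussCDF (x : ℝ) : ℝ := ∫ t in Set.Iic x, gaussPDF t

/-- Euclidean norm of a finite vector. -/
def vnorm {m : ℕ} (v : Fin m → ℝ) : ℝ := Real.sqrt (∑ i, v i ^ 2)

/-- Sup-norm of a finite vector. -/
def vnormInf {m : ℕ} (v : Fin m → ℝ) : ℝ := ⨆ j, |v j|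

open Classical in
/-- Number of nonzero coordinates of `θ`. -/
def suppCard {m : ℕ} (θ : Fin m → ℝ) : ℕ := (Finset.univ.filter fun j => θ j ≠ 0).card

/-- The function `φ(β)` describing the sharp detection boundary. -/
def phiFn (β : ℝ) : ℝ :=
  if β ≤ 3 / 4 then Real.sqrt (2 * β - 1) else Real.sqrt 2 * (1 - Real.sqrt (1 - β))

/-- The constant `u`: `u = 2φ(β)` for `β ∈ (1/2, 3/4]` and `u = √2` for `β ∈ (3/4, 1)`. -/
def uConst (β : ℝ) : ℝ := if β ≤ 3 / 4 then 2 * phiFn β else Real.sqrt 2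

/-- The set `Θ̃^{(3)}_k(r)`: `k`-sparse vectors with `‖θ‖ ≥ r`, `‖θ‖² < 4k log(p)/n`
and `‖θ‖_∞² < 4 log(p)/n`. -/
def Theta3 (n p k : ℕ) (r : ℝ) : Set (Fin p → ℝ) :=
  {θ | suppCard θ ≤ k ∧ r ≤ vnorm θ} ∩
    {θ | vnorm θ ^ 2 < 4 * (k : ℝ) * Real.log p / n} ∩
    {θ | vnormInf θ ^ 2 < 4 * Real.log p / n}

section GaussHelpers

open MeasureTheory Real Set

lemma gaussPDF_pos (x : ℝ) : 0 < gaussPDF x :=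
  div_pos (Real.exp_pos _) (Real.sqrt_pos.2 (by positivity))

lemma gaussPDF_eq (x : ℝ) :
    gaussPDF x = Real.exp (-(1/2) * x ^ 2) * (Real.sqrt (2 * Real.pi))⁻¹ := by
  rw [gaussPDF, div_eq_mul_inv]; ring_nf

lemma integrable_gaussPDF : Integrable gaussPDF := by
  have := (integrable_exp_neg_mul_sq (b := 1/2) (by norm_num)).mul_const
    (Real.sqrt (2 * Real.pi))⁻¹
  apply this.congr
  filter_upwards with x
  rw [gaussPDF_eq]

lemma gaussPDF_anti {x y : ℝ} (h : |x| ≤ |y|) : gaussPDF y ≤ gaussPDF x := by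
  have hx : x ^ 2 ≤ y ^ 2 := by
    rw [← sq_abs x, ← sq_abs y]; exact pow_le_pow_left₀ (abs_nonneg _) h 2
  unfold gaussPDF
  gcongr rexp ?_ / _
  linarith

lemma gaussCDF_mono : Monotone gaussCDF := by
  intro x y hxy
  apply setIntegral_mono_set integrable_gaussPDF.integrableOn
    (Eventually.of_forall fun t => (gaussPDF_pos t).le)
  exact HasSubset.Subset.eventuallyLE (Iic_subset_Iic.2 hxy)

lemma gaussCDF_nonneg (x : ℝ) : 0 ≤ gaussCDF x :=
  setIntegral_nonneg measurableSet_Iic fun t _ => (gaussPDF_pos t).le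

lemma gaussCDF_lower (y : ℝ) : gaussPDF (|y| + 1) ≤ gaussCDF y := by
  have h1 : gaussPDF (|y| + 1) * (volume (Icc (y-1) y)).toReal ≤
      ∫ t in Icc (y-1) y, gaussPDF t := by
    apply setIntegral_ge_of_const_le_real measurableSet_Icc (by simp)
    · intro t ht
      apply gaussPDF_anti
      rw [abs_of_nonneg (by positivity : (0:ℝ) ≤ |y| + 1), abs_le]
      constructor
      · cases abs_cases y with
        | inl h => nlinarith [ht.1, abs_nonneg y, h.1]
        | inr h => nlinarith [ht.1, abs_nonneg y, h.1]
      · cases abs_cases y with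
        | inl h => nlinarith [ht.2, abs_nonneg y, h.1]
        | inr h => nlinarith [ht.2, abs_nonneg y, h.1]
    · exact integrable_gaussPDF.integrableOn
  rw [Real.volume_Icc] at h1
  have h2 : (ENNReal.ofReal (y - (y-1))).toReal = 1 := by norm_num
  rw [h2, mul_one] at h1
  refine h1.trans ?_
  apply setIntegral_mono_set integrable_gaussPDF.integrableOn
    (Eventually.of_forall fun t => (gaussPDF_pos t).le)
  exact HasSubset.Subset.eventuallyLE (fun t ht => ht.2)

lemma gaussCDF_pos (x : ℝ) : 0 < gaussCDF x :=
  lt_of_lt_of_le (gaussPDF_pos _) (gaussCDF_lower x)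

lemma integral_gaussPDF : ∫ t, gaussPDF t = 1 := by
  have h := integral_gaussian (1/2 : ℝ)
  have h2 : ∫ t, gaussPDF t
      = (∫ t : ℝ, Real.exp (-(1/2) * t ^ 2)) * (Real.sqrt (2 * Real.pi))⁻¹ := by
    rw [← integral_mul_const]
    exact integral_congr_ae (Eventually.of_forall fun t => gaussPDF_eq t)
  rw [h2, h]
  rw [show Real.pi / (1/2) = 2 * Real.pi by ring]
  rw [mul_inv_cancel₀ (Real.sqrt_ne_zero'.2 (by positivity))]

lemma gaussCDF_zero : gaussCDF 0 = 1/2 := by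
  have hsym : gaussCDF 0 = ∫ t in Ioi (0:ℝ), gaussPDF t := by
    have h1 := integral_comp_neg_Iic (0:ℝ) gaussPDF
    rw [neg_zero] at h1
    rw [gaussCDF, ← h1]
    refine integral_congr_ae (Eventually.of_forall fun t => ?_)
    simp [gaussPDF, neg_pow]
  have hadd := intervalIntegral.integral_Iic_add_Ioi (b := (0:ℝ)) (f := gaussPDF) (μ := volume)
    integrable_gaussPDF.integrableOn integrable_gaussPDF.integrableOn
  rw [integral_gaussPDF] at hadd
  rw [gaussCDF] at hsym ⊢
  linarith

lemma gaussCDF_upper {x : ℝ} (hx : 0 ≤ x) : gaussCDF (-x) ≤ Real.exp (-(x^2)/2) / 2 := by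
  have hemb : MeasurableEmbedding (fun t : ℝ => t - x) :=
    (Homeomorph.subRight x).isClosedEmbedding.measurableEmbedding
  have hmp : MeasurePreserving (fun t : ℝ => t - x) volume volume :=
    measurePreserving_sub_right volume x
  have hpre : (fun t : ℝ => t - x) ⁻¹' (Iic (-x)) = Iic 0 := by
    ext t; simp [sub_le_iff_le_add]
  have htrans : gaussCDF (-x) = ∫ t in Iic (0:ℝ), gaussPDF (t - x) := by
    rw [gaussCDF, ← hmp.setIntegral_preimage_emb hemb gaussPDF (Iic (-x)), hpre]
  rw [htrans]
  have hb : ∫ t in Iic (0:ℝ), gaussPDF (t - x) ≤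
      ∫ t in Iic (0:ℝ), Real.exp (-(x^2)/2) * gaussPDF t := by
    apply setIntegral_mono_on
    · exact (integrable_gaussPDF.comp_sub_right x).integrableOn
    · exact (integrable_gaussPDF.const_mul _).integrableOn
    · exact measurableSet_Iic
    · intro t ht
      rw [gaussPDF, gaussPDF, ← mul_div_assoc, ← Real.exp_add]
      gcongr rexp ?_ / _
      have ht0 : t ≤ 0 := ht
      nlinarith [mul_nonneg (neg_nonneg.2 ht0) hx]
  calc ∫ t in Iic (0:ℝ), gaussPDF (t - x) ≤ _ := hb
    _ = Real.exp (-(x^2)/2) * gaussCDF 0 := integral_const_mul _ _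
    _ = Real.exp (-(x^2)/2) / 2 := by rw [gaussCDF_zero]; ring

lemma phiFn_pos {β : ℝ} (hβ : 1/2 < β) (hβ1 : β < 1) : 0 < phiFn β := by
  unfold phiFn
  split_ifs with h
  · exact Real.sqrt_pos.2 (by linarith)
  · have h1 : Real.sqrt (1-β) < 1 := (Real.sqrt_lt' one_pos).2 (by nlinarith)
    exact mul_pos (Real.sqrt_pos.2 two_pos) (by linarith)

lemma phiFn_lt_uConst {β : ℝ} (hβ : 1/2 < β) (hβ1 : β < 1) : phiFn β < uConst β := by
  have hφ := phiFn_pos hβ hβ1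
  unfold uConst
  split_ifs with h
  · linarith
  · unfold phiFn at hφ ⊢
    rw [if_neg h] at hφ ⊢
    have h1 : 0 < Real.sqrt (1-β) := Real.sqrt_pos.2 (by linarith)
    nlinarith [Real.sqrt_pos.2 (show (0:ℝ) < 2 by norm_num)]

lemma key_identity {β : ℝ} (hβ : 1/2 < β) (hβ1 : β < 1) :
    2*(1-β) = (uConst β - phiFn β)^2 + 1 - (uConst β)^2/2 := by
  unfold uConst phiFn
  split_ifs with h
  · have h1 : Real.sqrt (2*β-1)^2 = 2*β-1 := Real.sq_sqrt (by linarith)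
    linear_combination h1
  · have h2 : Real.sqrt 2^2 = 2 := Real.sq_sqrt (by norm_num)
    have h3 : Real.sqrt (1-β)^2 = 1-β := Real.sq_sqrt (by linarith)
    nlinarith [h2, h3]

lemma uConst_pos {β : ℝ} (hβ : 1/2 < β) (hβ1 : β < 1) : 0 < uConst β :=
  (phiFn_pos hβ hβ1).trans (phiFn_lt_uConst hβ hβ1)

end GaussHelpers

set_option maxHeartbeats 2000000 in
/-- **Lemma.** With `T_p = √(log p)`, `ũ = u(1+δ)`, `ρ̃_j = (1-δ)√n |θ_j|`, `δ → 0`,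
and `r = (φ(β)+δ₀)√(k log(p)/n)`, there exists `η > 0` such that for `n, p` large
enough, uniformly over `θ ∈ Θ̃^{(3)}_k(r)` (supported on the first `k` coordinates),
`Σ_{j=1}^k Φ(-ũT_p + ρ̃_j) / √(2pΦ(-uT_p)) > p^η`. -/
theorem inf_expectation_lower_bound
    (n p k : ℕ → ℕ) (hn : Tendsto n atTop atTop) (hp : Tendsto p atTop atTop)
    (hkp : ∀ ν, k ν ≤ p ν)
    (β : ℝ) (hβ : 1 / 2 < β) (hβ1 : β < 1)
    (hk : ∀ ν, (k ν : ℝ) = (p ν : ℝ) ^ (1 - β))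
    (hklogp : Tendsto (fun ν => (k ν : ℝ) * Real.log (p ν) / (n ν)) atTop (nhds 0))
    (δ₀ : ℝ) (hδ₀ : 0 < δ₀)
    (δ : ℕ → ℝ) (hδpos : ∀ ν, 0 < δ ν) (hδ : Tendsto δ atTop (nhds 0)) :
    ∃ η : ℝ, 0 < η ∧
      ∀ᶠ ν in atTop, ∀ θ : Fin (p ν) → ℝ,
        θ ∈ Theta3 (n ν) (p ν) (k ν)
          ((phiFn β + δ₀) * Real.sqrt ((k ν : ℝ) * Real.log (p ν) / (n ν))) →
        (∀ l : Fin (p ν), k ν ≤ (l : ℕ) → θ l = 0) →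
        (p ν : ℝ) ^ η <
          (∑ j : Fin (k ν),
              gaussCDF (-(uConst β * (1 + δ ν)) * Real.sqrt (Real.log (p ν)) +
                (1 - δ ν) * Real.sqrt (n ν) * |θ (Fin.castLE (hkp ν) j)|)) /
            Real.sqrt (2 * (p ν : ℝ) * gaussCDF (-(uConst β) * Real.sqrt (Real.log (p ν)))) := by
  classical
  have hφpos : 0 < phiFn β := phiFn_pos hβ hβ1
  have hupos : 0 < uConst β := uConst_pos hβ hβ1
  have huφ : phiFn β < uConst β := phiFn_lt_uConst hβ hβ1
  have hid : 2*(1-β) = (uConst β - phiFn β)^2 + 1 - (uConst β)^2/2 := key_identity hβ hβ1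
  set φv := phiFn β with hφv
  set u := uConst β with hu
  set s : ℝ := u - φv with hs
  have hspos : 0 < s := sub_pos.2 huφ
  set t : ℝ := min δ₀ s / 2 with ht
  have htpos : 0 < t := div_pos (lt_min hδ₀ hspos) two_pos
  have hts : t ≤ s / 2 := by
    have := min_le_right δ₀ s; rw [ht]; linarith
  have htδ : t ≤ δ₀ / 2 := by
    have := min_le_left δ₀ s; rw [ht]; linarith
  set a : ℝ := φv + t with ha
  have hapos : 0 < a := by positivity
  have hau : a < u := by
    have : t < s := lt_of_le_of_lt hts (by linarith)
    rw [ha, hs] at *; linarith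
  set c : ℝ := ((φv + δ₀)^2 - a^2) / 4 with hc
  have hcpos : 0 < c := by
    rw [hc]
    have h1 : a < φv + δ₀ := by rw [ha]; linarith
    nlinarith
  set η : ℝ := s * t / 8 with hη
  have hηpos : 0 < η := by positivity
  refine ⟨η, hηpos, ?_⟩
  set E' : ℝ := (1-β) - ((s-t)^2 + η)/2 - η - (1 - u^2/2)/2 with hE'
  have hE'pos : 0 < E' := by
    have hE'eq : E' = (2*s*t - t^2)/2 - 3*(s*t)/16 := by
      rw [hE', hη]; linear_combination (1/2) * hid
    rw [hE'eq]
    nlinarith [mul_pos hspos htpos,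
      mul_nonneg htpos.le (sub_nonneg.2 (by linarith : 2*t ≤ s))]
  set ε₃ : ℝ := min 1 (η / (2*(s-t) + 1)) with hε₃
  have hstpos : 0 < s - t := by linarith [hts, hspos]
  have hε₃pos : 0 < ε₃ := lt_min one_pos (div_pos hηpos (by linarith))
  clear_value φv u s t a c η E' ε₃
  have hLtend : Tendsto (fun ν => Real.log (p ν)) atTop atTop :=
    Real.tendsto_log_atTop.comp (tendsto_natCast_atTop_atTop.comp hp)
  have hC6 : ∀ᶠ ν in atTop,
      1 < c / Real.sqrt (2*Real.pi) * Real.exp (E' * Real.log (p ν)) := by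
    have h1 : Tendsto (fun ν => E' * Real.log (p ν)) atTop atTop :=
      hLtend.const_mul_atTop hE'pos
    have hpos2 : (0:ℝ) < c / Real.sqrt (2*Real.pi) :=
      div_pos hcpos (Real.sqrt_pos.2 (by positivity))
    have h2 : Tendsto (fun ν => c / Real.sqrt (2*Real.pi) * Real.exp (E' * Real.log (p ν)))
        atTop atTop := (Real.tendsto_exp_atTop.comp h1).const_mul_atTop hpos2
    exact h2.eventually_gt_atTop 1
  have hδev : ∀ᶠ ν in atTop, δ ν ≤ min (1/2) (ε₃ / (2*(u+a))) := by
    apply hδ.eventually_le_const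
    exact lt_min (by norm_num) (div_pos hε₃pos (by linarith only [hupos, hapos]))
  filter_upwards [hp.eventually_ge_atTop 1, hn.eventually_ge_atTop 1,
    hLtend.eventually_ge_atTop (max 1 ((2/ε₃)^2)), hδev, hC6] with ν hp1 hn1 hLmax hδν hC6ν
  intro θ hθ hzero
  obtain ⟨⟨⟨hsupp, hrle⟩, hnorm2⟩, hinf2⟩ := hθ
  set P : ℝ := (p ν : ℝ) with hP
  set K : ℝ := (k ν : ℝ) with hK
  set N : ℝ := (n ν : ℝ) with hN
  set L : ℝ := Real.log P with hL
  have hP1 : (1:ℝ) ≤ P := by rw [hP]; exact_mod_cast hp1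
  have hPpos : 0 < P := by linarith only [hP1]
  have hN1 : (1:ℝ) ≤ N := by rw [hN]; exact_mod_cast hn1
  have hNpos : 0 < N := by linarith only [hN1]
  have hL1 : 1 ≤ L := le_trans (le_max_left _ _) hLmax
  have hLpos : 0 < L := by linarith only [hL1]
  have hKe : K = Real.exp ((1-β)*L) := by
    rw [hK, hk ν, Real.rpow_def_of_pos hPpos, mul_comm]
  have hKpos : 0 < K := by rw [hKe]; exact Real.exp_pos _
  have hPe : P = Real.exp L := (Real.exp_log hPpos).symm
  set T : ℝ := Real.sqrt L with hT
  have hTpos : 0 < T := Real.sqrt_pos.2 hLpos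
  have hT1 : 1 ≤ T := by
    rw [hT, show (1:ℝ) = Real.sqrt 1 by rw [Real.sqrt_one]]
    exact Real.sqrt_le_sqrt hL1
  have hT2 : T^2 = L := Real.sq_sqrt hLpos.le
  clear_value P K N L T
  -- coordinatewise upper bound
  have hcoord : ∀ i, θ i ^ 2 ≤ 4 * L / N := by
    intro i
    have habs : |θ i| ≤ vnormInf θ := by
      exact le_ciSup (f := fun j => |θ j|) (Set.Finite.bddAbove (Set.finite_range _)) i
    have h2 : |θ i|^2 ≤ vnormInf θ ^ 2 := pow_le_pow_left₀ (abs_nonneg _) habs 2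
    rw [sq_abs] at h2
    exact h2.trans hinf2.le
  -- lower bound on the norm
  have hvn2 : vnorm θ ^ 2 = ∑ i, θ i ^ 2 := by
    rw [vnorm, Real.sq_sqrt (Finset.sum_nonneg fun i _ => sq_nonneg _)]
  have hKLN : (0:ℝ) ≤ K * L / N :=
    div_nonneg (mul_nonneg hKpos.le hLpos.le) hNpos.le
  have hrsq : (φv + δ₀)^2 * (K*L/N) ≤ ∑ i, θ i ^ 2 := by
    have h0 : 0 ≤ (φv + δ₀) * Real.sqrt (K*L/N) :=
      mul_nonneg (by linarith only [hφpos, hδ₀]) (Real.sqrt_nonneg _)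
    have h1 := pow_le_pow_left₀ h0 hrle 2
    rw [mul_pow, Real.sq_sqrt hKLN, hvn2] at h1
    exact h1
  -- pigeonhole
  set q : ℝ := a^2 * (L/N) with hq
  have hqpos : 0 < q := by
    rw [hq]; exact mul_pos (pow_pos hapos 2) (div_pos hLpos hNpos)
  clear_value q
  set Sp : Finset (Fin (p ν)) := Finset.univ.filter (fun i => q ≤ θ i ^ 2) with hSp
  clear_value Sp
  have hsum_split := Finset.sum_filter_add_sum_filter_not Finset.univ
    (fun i : Fin (p ν) => q ≤ θ i ^ 2) (fun i => θ i ^ 2)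
  have hS1 : ∑ i ∈ Finset.univ.filter (fun i : Fin (p ν) => ¬ q ≤ θ i ^ 2), θ i ^ 2
      ≤ K * q := by
    have hsub : ∑ i ∈ (Finset.univ.filter
          (fun i : Fin (p ν) => ¬ q ≤ θ i ^ 2)).filter (fun i => θ i ≠ 0), θ i ^ 2
        = ∑ i ∈ Finset.univ.filter (fun i : Fin (p ν) => ¬ q ≤ θ i ^ 2), θ i ^ 2 :=
      Finset.sum_filter_of_ne (fun x _ hne => fun h0 => hne (by rw [h0]; ring))
    rw [← hsub]
    have hb : ∀ x ∈ (Finset.univ.filter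
        (fun i : Fin (p ν) => ¬ q ≤ θ i ^ 2)).filter (fun i => θ i ≠ 0), θ x ^ 2 ≤ q := by
      intro x hx
      simp only [Finset.mem_filter, Finset.mem_univ, true_and] at hx
      exact (not_le.1 hx.1).le
    calc ∑ i ∈ (Finset.univ.filter
          (fun i : Fin (p ν) => ¬ q ≤ θ i ^ 2)).filter (fun i => θ i ≠ 0), θ i ^ 2
        ≤ ((Finset.univ.filter
          (fun i : Fin (p ν) => ¬ q ≤ θ i ^ 2)).filter (fun i => θ i ≠ 0)).card • q :=
          Finset.sum_le_card_nsmul _ _ _ hb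
      _ = (((Finset.univ.filter
          (fun i : Fin (p ν) => ¬ q ≤ θ i ^ 2)).filter (fun i => θ i ≠ 0)).card : ℝ) * q := by
          rw [nsmul_eq_mul]
      _ ≤ K * q := by
          apply mul_le_mul_of_nonneg_right _ hqpos.le
          have hc1 : ((Finset.univ.filter
              (fun i : Fin (p ν) => ¬ q ≤ θ i ^ 2)).filter (fun i => θ i ≠ 0)).card
              ≤ suppCard θ := by
            rw [suppCard]
            apply Finset.card_le_card
            intro x hx
            simp only [Finset.mem_filter, Finset.mem_univ, true_and] at hx ⊢
            exact hx.2
          calc (((Finset.univ.filter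
              (fun i : Fin (p ν) => ¬ q ≤ θ i ^ 2)).filter (fun i => θ i ≠ 0)).card : ℝ)
              ≤ (suppCard θ : ℝ) := by exact_mod_cast hc1
            _ ≤ K := by rw [hK]; exact_mod_cast hsupp
  have hS2 : ∑ i ∈ Sp, θ i ^ 2 ≤ (Sp.card : ℝ) * (4 * L / N) := by
    have := Finset.sum_le_card_nsmul Sp (fun i => θ i ^ 2) (4*L/N) (fun x _ => hcoord x)
    simpa [nsmul_eq_mul] using this
  have hw : (0:ℝ) < L / N := div_pos hLpos hNpos
  have hcardK : c * K ≤ (Sp.card : ℝ) := by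
    have h5 : (φv + δ₀)^2 * K * (L/N) ≤ (Sp.card : ℝ) * 4 * (L/N) + K * (a^2 * (L/N)) := by
      have e1 : (φv + δ₀)^2 * K * (L/N) = (φv + δ₀)^2 * (K*L/N) := by ring
      have e2 : (Sp.card : ℝ) * (4 * L / N) = (Sp.card : ℝ) * 4 * (L/N) := by ring
      rw [e1]
      calc (φv + δ₀)^2 * (K*L/N) ≤ ∑ i, θ i ^ 2 := hrsq
        _ = (∑ i ∈ Sp, θ i ^ 2) + ∑ i ∈ Finset.univ.filter
            (fun i : Fin (p ν) => ¬ q ≤ θ i ^ 2), θ i ^ 2 := by rw [hSp, ← hsum_split]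
        _ ≤ (Sp.card : ℝ) * (4 * L / N) + K * q := add_le_add hS2 hS1
        _ = (Sp.card : ℝ) * 4 * (L/N) + K * (a^2 * (L/N)) := by rw [e2, hq]
    have h6 : ((φv + δ₀)^2 - a^2) * K * (L/N) ≤ ((Sp.card : ℝ) * 4) * (L/N) := by
      linarith only [h5]
    have h7 : ((φv + δ₀)^2 - a^2) * K ≤ (Sp.card : ℝ) * 4 :=
      le_of_mul_le_mul_right h6 hw
    rw [hc, div_mul_eq_mul_div, div_le_iff₀ (show (0:ℝ) < 4 by norm_num)]
    exact h7
  -- transfer the count to Fin (k ν)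
  set Sk : Finset (Fin (k ν)) :=
    Finset.univ.filter (fun j => q ≤ θ (Fin.castLE (hkp ν) j) ^ 2) with hSk
  clear_value Sk
  have hcard2 : Sp.card ≤ Sk.card := by
    apply Finset.card_le_card_of_surjOn (Fin.castLE (hkp ν))
    intro i hi
    simp only [hSp, Finset.coe_filter, Finset.mem_univ, true_and, Set.mem_setOf_eq] at hi
    have hne : θ i ≠ 0 := by
      intro h0
      rw [h0] at hi
      simp at hi
      nlinarith only [hi, hqpos]
    have hlt : (i : ℕ) < k ν := lt_of_not_ge fun hge => hne (hzero i hge)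
    refine ⟨⟨(i : ℕ), hlt⟩, ?_, ?_⟩
    · simp only [hSk, Finset.coe_filter, Finset.mem_univ, true_and, Set.mem_setOf_eq]
      have hcast : Fin.castLE (hkp ν) ⟨(i : ℕ), hlt⟩ = i := by
        ext; simp [Fin.castLE]
      rw [hcast]
      exact hi
    · ext; simp [Fin.castLE]
  have hm : c * K ≤ (Sk.card : ℝ) := hcardK.trans (by exact_mod_cast hcard2)
  -- the value -x
  set x : ℝ := (u * (1 + δ ν) - (1 - δ ν) * a) * T with hx
  clear_value x
  have hδν2 : δ ν ≤ 1/2 := le_trans hδν (min_le_left _ _)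
  have hδνpos := hδpos ν
  have hxa : 0 ≤ x := by
    have h1 : 0 ≤ u * (1 + δ ν) - (1 - δ ν) * a := by
      nlinarith only [hau, hapos, hδνpos, hupos]
    rw [hx]
    exact mul_nonneg h1 hTpos.le
  -- per-coordinate lower bound for j ∈ Sk
  have hjb : ∀ j ∈ Sk, gaussCDF (-x) ≤
      gaussCDF (-(u * (1 + δ ν)) * T + (1 - δ ν) * Real.sqrt N * |θ (Fin.castLE (hkp ν) j)|) := by
    intro j hj
    apply gaussCDF_mono
    simp only [hSk, Finset.mem_filter, Finset.mem_univ, true_and] at hj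
    have h8 : a * T ≤ Real.sqrt N * |θ (Fin.castLE (hkp ν) j)| := by
      have h9 : (a*T)^2 ≤ (Real.sqrt N * |θ (Fin.castLE (hkp ν) j)|)^2 := by
        rw [mul_pow, mul_pow, hT2, Real.sq_sqrt hNpos.le, sq_abs]
        calc a^2 * L = N * q := by rw [hq]; field_simp
          _ ≤ N * θ (Fin.castLE (hkp ν) j) ^ 2 := mul_le_mul_of_nonneg_left hj hNpos.le
      calc a * T = Real.sqrt ((a*T)^2) :=
            (Real.sqrt_sq (mul_nonneg hapos.le hTpos.le)).symm
        _ ≤ Real.sqrt ((Real.sqrt N * |θ (Fin.castLE (hkp ν) j)|)^2) := Real.sqrt_le_sqrt h9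
        _ = Real.sqrt N * |θ (Fin.castLE (hkp ν) j)| := Real.sqrt_sq (by positivity)
    have hδ1 : (0:ℝ) ≤ 1 - δ ν := by linarith only [hδν2]
    have h10 := mul_le_mul_of_nonneg_left h8 hδ1
    have hxe : -x = -(u * (1 + δ ν)) * T + (1 - δ ν) * (a * T) := by rw [hx]; ring
    rw [hxe]
    linarith only [h10]
  -- numerator lower bound
  have hnum1 : (Sk.card : ℝ) * gaussCDF (-x) ≤
      ∑ j : Fin (k ν), gaussCDF (-(u * (1 + δ ν)) * T +
        (1 - δ ν) * Real.sqrt N * |θ (Fin.castLE (hkp ν) j)|) := by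
    calc (Sk.card : ℝ) * gaussCDF (-x) = Sk.card • gaussCDF (-x) := (nsmul_eq_mul _ _).symm
      _ ≤ ∑ j ∈ Sk, gaussCDF (-(u * (1 + δ ν)) * T +
          (1 - δ ν) * Real.sqrt N * |θ (Fin.castLE (hkp ν) j)|) :=
          Finset.card_nsmul_le_sum Sk _ _ hjb
      _ ≤ ∑ j : Fin (k ν), gaussCDF (-(u * (1 + δ ν)) * T +
          (1 - δ ν) * Real.sqrt N * |θ (Fin.castLE (hkp ν) j)|) :=
          Finset.sum_le_sum_of_subset_of_nonneg (Finset.subset_univ _)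
            (fun j _ _ => gaussCDF_nonneg _)
  have hgl : gaussPDF (x+1) ≤ gaussCDF (-x) := by
    have h := gaussCDF_lower (-x)
    rwa [abs_neg, abs_of_nonneg hxa] at h
  -- bound gaussPDF (x+1) from below
  set g : ℝ := δ ν * (u + a) + T⁻¹ with hg
  clear_value g
  have hg0 : 0 ≤ g := by
    have h1 : 0 ≤ T⁻¹ := inv_nonneg.2 hTpos.le
    have h2 : 0 ≤ δ ν * (u + a) :=
      mul_nonneg hδνpos.le (by linarith only [hupos, hapos])
    rw [hg]
    linarith only [h1, h2]
  have hgε : g ≤ ε₃ := by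
    have h1 : δ ν * (u + a) ≤ ε₃ / 2 := by
      have h2 : δ ν ≤ ε₃ / (2*(u+a)) := le_trans hδν (min_le_right _ _)
      have h3 : 0 < u + a := by linarith only [hupos, hapos]
      calc δ ν * (u+a) ≤ ε₃ / (2*(u+a)) * (u+a) :=
            mul_le_mul_of_nonneg_right h2 h3.le
        _ = ε₃ / 2 := by field_simp
    have h4 : T⁻¹ ≤ ε₃ / 2 := by
      have h5 : (2/ε₃)^2 ≤ L := le_trans (le_max_right _ _) hLmax
      have h6 : 2/ε₃ ≤ T := by
        rw [hT, show (2/ε₃ : ℝ) = Real.sqrt ((2/ε₃)^2) from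
          (Real.sqrt_sq (div_nonneg (by norm_num) hε₃pos.le)).symm]
        exact Real.sqrt_le_sqrt h5
      have h7 : 0 < 2/ε₃ := div_pos two_pos hε₃pos
      calc T⁻¹ ≤ (2/ε₃)⁻¹ := inv_anti₀ h7 h6
        _ = ε₃ / 2 := by field_simp
    rw [hg]
    linarith only [h1, h4]
  have hgsq : ((s-t) + g)^2 ≤ (s-t)^2 + η := by
    have hg1 : g ≤ 1 := le_trans hgε (by rw [hε₃]; exact min_le_left _ _)
    have hg2 : g * (2*(s-t) + 1) ≤ η := by
      have h1 : ε₃ ≤ η / (2*(s-t)+1) := by rw [hε₃]; exact min_le_right _ _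
      have h2 : (0:ℝ) < 2*(s-t)+1 := by linarith only [hstpos]
      calc g * (2*(s-t)+1) ≤ ε₃ * (2*(s-t)+1) := mul_le_mul_of_nonneg_right hgε h2.le
        _ ≤ η / (2*(s-t)+1) * (2*(s-t)+1) := mul_le_mul_of_nonneg_right h1 h2.le
        _ = η := by field_simp
    nlinarith only [hg0, hg1, hg2]
  have hgx : x + 1 = ((s-t) + g) * T := by
    have hTinv : T⁻¹ * T = 1 := inv_mul_cancel₀ hTpos.ne'
    have hsa : s - t = u - a := by rw [hs, ha]; ring
    calc x + 1 = (u * (1 + δ ν) - (1 - δ ν) * a) * T + T⁻¹ * T := by rw [hTinv, hx]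
      _ = ((s-t) + g) * T := by rw [hsa, hg]; ring
  have hpdf : Real.exp (-((s-t)^2 + η) * L / 2) / Real.sqrt (2*Real.pi)
      ≤ gaussPDF (x+1) := by
    rw [gaussPDF]
    gcongr Real.exp ?_ / _
    have hsq2 : (x+1)^2 ≤ ((s-t)^2 + η) * L := by
      rw [hgx, mul_pow, hT2]
      exact mul_le_mul_of_nonneg_right hgsq hLpos.le
    linarith only [hsq2]
  -- denominator upper bound
  have hDin : (0:ℝ) < 2 * P * gaussCDF (-u * T) :=
    mul_pos (mul_pos two_pos hPpos) (gaussCDF_pos _)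
  have hDpos : 0 < Real.sqrt (2 * P * gaussCDF (-u * T)) := Real.sqrt_pos.2 hDin
  have hDub : Real.sqrt (2 * P * gaussCDF (-u * T)) ≤ Real.exp ((1 - u^2/2) * L / 2) := by
    have h10 : gaussCDF (-(u*T)) ≤ Real.exp (-((u*T)^2)/2) / 2 :=
      gaussCDF_upper (mul_nonneg hupos.le hTpos.le)
    have h11 : 2 * P * gaussCDF (-u * T) ≤ Real.exp ((1 - u^2/2) * L) := by
      have hneg : -u * T = -(u*T) := by ring
      calc 2 * P * gaussCDF (-u * T) ≤ 2 * P * (Real.exp (-((u*T)^2)/2) / 2) := by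
            rw [hneg]
            exact mul_le_mul_of_nonneg_left h10 (by linarith only [hPpos])
        _ = P * Real.exp (-(u^2*L)/2) := by rw [mul_pow, hT2]; ring
        _ = Real.exp L * Real.exp (-(u^2*L)/2) := by rw [← hPe]
        _ = Real.exp ((1 - u^2/2) * L) := by rw [← Real.exp_add]; ring_nf
    calc Real.sqrt (2 * P * gaussCDF (-u * T)) ≤ Real.sqrt (Real.exp ((1 - u^2/2) * L)) :=
          Real.sqrt_le_sqrt h11
      _ = Real.exp ((1 - u^2/2) * L / 2) := by
          have h12 : (Real.exp ((1 - u^2/2) * L / 2))^2 = Real.exp ((1 - u^2/2) * L) := by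
            rw [sq, ← Real.exp_add]; congr 1; ring
          rw [← h12]
          exact Real.sqrt_sq (Real.exp_pos _).le
  -- conclude
  rw [lt_div_iff₀ hDpos]
  have hPη : P ^ η = Real.exp (η * L) := by
    rw [Real.rpow_def_of_pos hPpos, hL, mul_comm]
  have hEe : E' * L + (η * L + (1 - u^2/2) * L / 2)
      = (1-β) * L + (-((s-t)^2 + η) * L / 2) := by
    rw [hE']; ring
  calc P ^ η * Real.sqrt (2 * P * gaussCDF (-u * T))
      ≤ Real.exp (η * L) * Real.exp ((1 - u^2/2) * L / 2) := by
        rw [hPη]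
        exact mul_le_mul_of_nonneg_left hDub (Real.exp_pos _).le
    _ = Real.exp (η * L + (1 - u^2/2) * L / 2) := (Real.exp_add _ _).symm
    _ < (c / Real.sqrt (2*Real.pi) * Real.exp (E' * L)) *
          Real.exp (η * L + (1 - u^2/2) * L / 2) := by
        nlinarith only [Real.exp_pos (η * L + (1 - u^2/2) * L / 2), hC6ν]
    _ = c * K * (Real.exp (-((s-t)^2 + η) * L / 2) / Real.sqrt (2*Real.pi)) := by
        rw [hKe, mul_assoc, ← Real.exp_add, hEe, Real.exp_add]
        ring
    _ ≤ c * K * gaussPDF (x+1) :=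
        mul_le_mul_of_nonneg_left hpdf (mul_nonneg hcpos.le hKpos.le)
    _ ≤ c * K * gaussCDF (-x) :=
        mul_le_mul_of_nonneg_left hgl (mul_nonneg hcpos.le hKpos.le)
    _ ≤ (Sk.card : ℝ) * gaussCDF (-x) :=
        mul_le_mul_of_nonneg_right hm (gaussCDF_nonneg _)
    _ ≤ ∑ j : Fin (k ν), gaussCDF (-(u * (1 + δ ν)) * T +
          (1 - δ ν) * Real.sqrt N * |θ (Fin.castLE (hkp ν) j)|) := hnum1
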